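/- If the nature-state set N is finite, then every multi-leximin action is loss-averse. -/

import Mathlib

/-- The set of nature states on which two actions `a`, `a'` give different utilities. -/
def diffStates {A N : Type*} (u : A → N → ℝ) (a a' : A) : Set N :=
  {η | u a η ≠ u a' η}

/-- The infimum (in the extended reals, so that the infimum over the empty set is `+∞`)
of the utility of action `c` over a set `s` of nature states. -/
noncomputable def infOn {A N : Type*} (u : A → N → ℝ) (c : A) (s : Set N) : EReal :=
  ⨅ η ∈ s, (u c η : EReal)

/-- An action `a` is loss-averse if for every other action `a'`, over the set of nature states
where the two actions' utilities differ, the infimum of `a`'s utility is at least the infimum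
of `a'`'s utility. -/
def LossAverse {A N : Type*} (u : A → N → ℝ) (a : A) : Prop :=
  ∀ a' : A, infOn u a' (diffStates u a a') ≤ infOn u a (diffStates u a a')

/-- The vector (as a list) of the utilities `(u(a,η))_{η ∈ N}` of action `a`,
rearranged in nondecreasing order (`N` finite). -/
noncomputable def sVec {A N : Type*} [Fintype N] (u : A → N → ℝ) (a : A) : List ℝ :=
  (Finset.univ.val.map (u a)).sort (· ≤ ·)

/-- An action `a` is multi-leximin if its nondecreasingly sorted utility vector is greater
than or equal to that of every other action in the lexicographic order. -/
def MultiLeximin {A N : Type*} [Fintype N] (u : A → N → ℝ) (a : A) : Prop :=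
  ∀ a' : A, sVec u a' = sVec u a ∨ List.Lex (· < ·) (sVec u a') (sVec u a)

private lemma lex_append_left {r : ℝ → ℝ → Prop} :
    ∀ (s : List ℝ) {l₁ l₂ : List ℝ}, List.Lex r l₁ l₂ → List.Lex r (s ++ l₁) (s ++ l₂)
  | [], _, _, h => h
  | _ :: s, _, _, h => List.Lex.cons (lex_append_left s h)

private lemma lex_asymm : ∀ {l₁ l₂ : List ℝ},
    List.Lex (· < ·) l₁ l₂ → List.Lex (· < ·) l₂ l₁ → False := by
  intro l₁ l₂ h1
  induction h1 with
  | nil => intro h2; cases h2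
  | @rel a l₁ b l₂ hab =>
    intro h2
    cases h2 with
    | rel hba => exact absurd hab (asymm hba)
    | cons h => exact lt_irrefl _ hab
  | @cons a l₁ l₂ h ih =>
    intro h2
    cases h2 with
    | rel hba => exact lt_irrefl _ hba
    | cons h2' => exact ih h2'

private lemma sorted_decomp (t : ℝ) (l : List ℝ) (hl : l.Pairwise (· ≤ ·)) :
    l = l.filter (fun x => decide (x < t)) ++
      (List.replicate (l.count t) t ++ l.filter (fun x => decide (t < x))) := by
  classical
  refine (fun hp hs => List.Perm.eq_of_pairwise' hl hs hp) ?_ ?_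
  · rw [List.perm_iff_count]
    intro x
    rw [List.count_append, List.count_append]
    rcases lt_trichotomy x t with hx | hx | hx
    · have c1 : List.count x (l.filter (fun x => decide (x < t))) = l.count x :=
        List.count_filter (by simp [hx])
      have c2 : List.count x (List.replicate (l.count t) t) = 0 := by
        rw [List.count_replicate]
        simp [show ¬ t = x from fun h => absurd hx (h ▸ lt_irrefl t)]
      have c3 : List.count x (l.filter (fun x => decide (t < x))) = 0 :=
        List.count_eq_zero.2 (fun hmem => by
          have := (List.mem_filter.1 hmem).2
          simp at this
          exact absurd (hx.trans this) (lt_irrefl x))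
      rw [c1, c2, c3]; omega
    · subst hx
      have c1 : List.count x (l.filter (fun y => decide (y < x))) = 0 :=
        List.count_eq_zero.2 (fun hmem => by
          have := (List.mem_filter.1 hmem).2
          simp at this)
      have c3 : List.count x (l.filter (fun y => decide (x < y))) = 0 :=
        List.count_eq_zero.2 (fun hmem => by
          have := (List.mem_filter.1 hmem).2
          simp at this)
      rw [c1, c3, List.count_replicate]
      simp
    · have c1 : List.count x (l.filter (fun x => decide (x < t))) = 0 :=
        List.count_eq_zero.2 (fun hmem => by
          have := (List.mem_filter.1 hmem).2
          simp at this
          exact absurd (this.trans hx) (lt_irrefl x))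
      have c2 : List.count x (List.replicate (l.count t) t) = 0 := by
        rw [List.count_replicate]
        simp [ne_of_lt hx]
      have c3 : List.count x (l.filter (fun x => decide (t < x))) = l.count x :=
        List.count_filter (by simp [hx])
      rw [c1, c2, c3]; omega
  · rw [List.pairwise_append, List.pairwise_append]
    refine ⟨hl.filter _, ⟨?_, hl.filter _, ?_⟩, ?_⟩
    · exact List.pairwise_replicate.2 (Or.inr le_rfl)
    · intro x hx y hy
      rw [List.mem_replicate] at hx
      have hy' := (List.mem_filter.1 hy).2
      simp at hy'
      exact hx.2 ▸ le_of_lt hy'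
    · intro x hx y hy
      have hx' := (List.mem_filter.1 hx).2
      simp at hx'
      rcases List.mem_append.1 hy with hy | hy
      · rw [List.mem_replicate] at hy
        exact hy.2 ▸ le_of_lt hx'
      · have hy' := (List.mem_filter.1 hy).2
        simp at hy'
        exact le_of_lt (hx'.trans hy')

private lemma lex_of_sorted {t : ℝ} {l l' : List ℝ}
    (hl : l.Pairwise (· ≤ ·)) (hl' : l'.Pairwise (· ≤ ·))
    (hlen : l.length = l'.length)
    (hf : l.filter (fun x => decide (x < t)) = l'.filter (fun x => decide (x < t)))
    (hc : l'.count t < l.count t) :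
    List.Lex (· < ·) l l' := by
  classical
  have hd := sorted_decomp t l hl
  have hd' := sorted_decomp t l' hl'
  set A := l'.filter (fun x => decide (x < t)) with hA
  set C := l.filter (fun x => decide (t < x)) with hC
  set C' := l'.filter (fun x => decide (t < x)) with hC'
  set k := l.count t with hk
  set k' := l'.count t with hk'
  -- C' is nonempty
  have hlen2 : A.length + (k + C.length) = A.length + (k' + C'.length) := by
    have e1 := congrArg List.length hd
    have e2 := congrArg List.length hd'
    rw [List.length_append, List.length_append, List.length_replicate] at e1 e2
    rw [hf] at e1
    omega
  have hC'pos : 0 < C'.length := by omega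
  rw [hd, hd', hf]
  apply lex_append_left
  have hrep : List.replicate k t = List.replicate k' t ++ List.replicate (k - k') t := by
    rw [← List.replicate_add]
    congr 1
    omega
  rw [hrep, List.append_assoc]
  apply lex_append_left
  obtain ⟨d, hdd⟩ : ∃ d, k - k' = d + 1 := ⟨k - k' - 1, by omega⟩
  rw [hdd, List.replicate_succ]
  obtain ⟨c, cs, hcs⟩ : ∃ c cs, C' = c :: cs := by
    cases hCC : C' with
    | nil => rw [hCC] at hC'pos; simp at hC'pos
    | cons c cs => exact ⟨c, cs, rfl⟩
  rw [hcs]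
  have hc' : t < c := by
    have : c ∈ C' := by rw [hcs]; exact List.mem_cons_self
    have := (List.mem_filter.1 (hC' ▸ this)).2
    simpa using this
  exact List.Lex.rel hc'

/-- if the nature-state set is finite, every multi-leximin action is
loss-averse. -/
theorem multiLeximin_lossAverse {A N : Type*} [Nonempty A] [Fintype N] [Nonempty N]
    (u : A → N → ℝ) (a : A) (h : MultiLeximin u a) :
    LossAverse u a := by
  classical
  intro a'
  set D := diffStates u a a' with hD
  by_cases hne : D.Nonempty
  · obtain ⟨η0, hη0, hmin⟩ := Set.exists_min_image D (u a) (Set.toFinite D) hne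
    set t := u a η0 with ht
    by_cases hex : ∃ η ∈ D, u a' η ≤ t
    · obtain ⟨η1, hη1, hle⟩ := hex
      simp only [infOn]
      calc ⨅ η ∈ D, (u a' η : EReal) ≤ (u a' η1 : EReal) := iInf₂_le η1 hη1
        _ ≤ (t : EReal) := by exact_mod_cast hle
        _ ≤ ⨅ η ∈ D, (u a η : EReal) :=
          le_iInf₂ fun η hη => by exact_mod_cast hmin η hη
    · exfalso
      push_neg at hex
      -- hex : ∀ η ∈ D, t < u a' η
      have hnotD : ∀ η : N, η ∉ D → u a η = u a' η := fun η hη => not_not.1 hη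
      set l := sVec u a with hl
      set l' := sVec u a' with hl'
      have hsort : l.Pairwise (· ≤ ·) := Multiset.pairwise_sort _ _
      have hsort' : l'.Pairwise (· ≤ ·) := Multiset.pairwise_sort _ _
      have hcoe : (↑l : Multiset ℝ) = Finset.univ.val.map (u a) := Multiset.sort_eq _ _
      have hcoe' : (↑l' : Multiset ℝ) = Finset.univ.val.map (u a') := Multiset.sort_eq _ _
      have hlen : l.length = l'.length := by
        have : (Multiset.card (↑l : Multiset ℝ)) = Multiset.card (↑l' : Multiset ℝ) := by
          rw [hcoe, hcoe', Multiset.card_map, Multiset.card_map]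
        simpa using this
      -- filter equality
      have hMfilter : Multiset.filter (fun x => x < t) (↑l : Multiset ℝ) =
          Multiset.filter (fun x => x < t) (↑l' : Multiset ℝ) := by
        rw [hcoe, hcoe', Multiset.filter_map, Multiset.filter_map]
        have hpq : ∀ η ∈ Finset.univ.val,
            ((fun x => x < t) ∘ u a) η ↔ ((fun x => x < t) ∘ u a') η := by
          intro η _
          simp only [Function.comp_apply]
          constructor
          · intro hlt
            have hηD : η ∉ D := fun hmem => absurd hlt (not_lt.2 (hmin η hmem))
            rw [← hnotD η hηD]; exact hlt
          · intro hlt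
            have hηD : η ∉ D := fun hmem => absurd hlt (not_lt.2 (le_of_lt (hex η hmem)))
            rw [hnotD η hηD]; exact hlt
        rw [Multiset.filter_congr hpq]
        refine Multiset.map_congr rfl ?_
        intro η hη
        rw [Multiset.mem_filter] at hη
        have hlt : u a' η < t := hη.2
        have hηD : η ∉ D := fun hmem => absurd hlt (not_lt.2 (le_of_lt (hex η hmem)))
        exact hnotD η hηD
      have hlf : l.filter (fun x => decide (x < t)) = l'.filter (fun x => decide (x < t)) := by
        refine (fun hp => List.Perm.eq_of_pairwise' (hsort.filter _) (hsort'.filter _) hp) ?_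
        rw [← Multiset.coe_eq_coe, ← Multiset.filter_coe (fun x => x < t) l,
          ← Multiset.filter_coe (fun x => x < t) l']
        exact hMfilter
      -- count inequality
      have hcount : l'.count t < l.count t := by
        have e1 : l.count t = Multiset.count t ((↑l : Multiset ℝ)) :=
          (Multiset.coe_count t l).symm
        have e2 : l'.count t = Multiset.count t ((↑l' : Multiset ℝ)) :=
          (Multiset.coe_count t l').symm
        rw [e1, e2, hcoe, hcoe', Multiset.count_map, Multiset.count_map,
          ← Finset.filter_val, ← Finset.filter_val, ← Finset.card_def, ← Finset.card_def]
        apply Finset.card_lt_card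
        constructor
        · intro η hη
          rw [Finset.mem_filter] at hη ⊢
          refine ⟨Finset.mem_univ η, ?_⟩
          have hηD : η ∉ D := by
            intro hmem
            exact absurd hη.2.symm (ne_of_gt (hex η hmem))
          rw [hnotD η hηD]
          exact hη.2
        · intro hsub
          have hη0mem : η0 ∈ Finset.univ.filter (fun η => t = u a η) :=
            Finset.mem_filter.2 ⟨Finset.mem_univ η0, rfl⟩
          have := Finset.mem_filter.1 (hsub hη0mem)
          exact absurd this.2.symm (ne_of_gt (hex η0 hη0))
      have hLex : List.Lex (· < ·) l l' := lex_of_sorted hsort hsort' hlen hlf hcount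
      rcases h a' with heq | hlt
      · rw [← hl, ← hl'] at heq
        rw [heq] at hLex
        exact lex_asymm hLex hLex
      · exact lex_asymm hLex (by rw [← hl, ← hl'] at hlt; exact hlt)
  · rw [Set.not_nonempty_iff_eq_empty.1 hne]
    simp [infOn]
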